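/- Specification (the inverse of subsumption) is not well-founded even on acyclic TFSs: there is an infinite strictly increasing chain B₀ ⊏ B₁ ⊏ B₂ ⊏ ⋯ of acyclic TFSs. Concretely, with feature f and types ⊥ ⊏ t, let B_i have i+1 nodes in an f-chain, the first i typed t and the last typed ⊥; then B_i ⊏ B_{i+1} for all i. -/

import Mathlib

/-! Typed feature structures (TFSs), following Carpenter 1992.
`pathδ` extends the partial transition function `δ` to paths (lists of features). -/

variable {Nodes Feats Types : Type}

def pathδ (δ : Nodes → Feats → Option Nodes) : Nodes → List Feats → Option Nodes
  | q, [] => some q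
  | q, f :: π => (δ q f).bind fun q' => pathδ δ q' π

/-- A typed feature structure: a finite set of nodes `Q`, a root, and a partial
transition function `δ : Q × Feats ⇀ Q` (modelled as `none` outside its domain,
undefined outside `Q`), with every node reachable from the root. -/
structure TFS (Nodes Feats : Type) where
  Q : Finset Nodes
  root : Nodes
  root_mem : root ∈ Q
  δ : Nodes → Feats → Option Nodes
  dom : ∀ q f, (δ q f).isSome → q ∈ Q
  closed : ∀ q f q', δ q f = some q' → q' ∈ Q
  reach : ∀ q ∈ Q, ∃ π : List Feats, pathδ δ root π = some q

/-- The set of paths defined from the root of `A`. -/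
def TFS.Pi (A : TFS Nodes Feats) : Set (List Feats) :=
  {π | (pathδ A.δ A.root π).isSome}

/-- `A` is cyclic if some node returns to itself along a nonempty path. -/
def TFS.Cyclic (A : TFS Nodes Feats) : Prop :=
  ∃ q ∈ A.Q, ∃ α : List Feats, α ≠ [] ∧ pathδ A.δ q α = some q

def TFS.Acyclic (A : TFS Nodes Feats) : Prop := ¬ A.Cyclic

/-- A subsumption morphism from `A` to `B` w.r.t. the typing function `θ`:
maps root to root, maps `Q_A` into `Q_B`, is monotone on node types,
and commutes with the transition function. -/
def IsMorphism [PartialOrder Types] (θ : Nodes → Types)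
    (A B : TFS Nodes Feats) (h : Nodes → Nodes) : Prop :=
  h A.root = B.root ∧ (∀ q ∈ A.Q, h q ∈ B.Q) ∧ (∀ q ∈ A.Q, θ q ≤ θ (h q)) ∧
  ∀ q f q', A.δ q f = some q' → B.δ (h q) f = some (h q')

/-- `A` subsumes `B` iff some subsumption morphism from `A` to `B` exists. -/
def Subsumes [PartialOrder Types] (θ : Nodes → Types) (A B : TFS Nodes Feats) : Prop :=
  ∃ h, IsMorphism θ A B h

/-- Strict subsumption: `A ⊏ B` iff `A ⊑ B` and not `B ⊑ A`. -/
def StrictlySubsumes [PartialOrder Types] (θ : Nodes → Types) (A B : TFS Nodes Feats) : Prop :=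
  Subsumes θ A B ∧ ¬ Subsumes θ B A

/-- The typing function: chain nodes `Sum.inl n` have type `t = true`, the final node
`Sum.inr ()` has type `⊥ = false` (with `false < true` in `Bool`). -/
def θ₀ : ℕ ⊕ Unit → Bool := Sum.elim (fun _ => true) (fun _ => false)

/-- Specification (the inverse of subsumption) is not well-founded even on
acyclic TFSs. Concretely, with one feature and types `⊥ ⊏ t`, letting `B i` be an
`f`-chain of `i+1` nodes, the first `i` typed `t` and the last typed `⊥`, the `B i`
form an infinite strictly increasing chain `B₀ ⊏ B₁ ⊏ B₂ ⊏ ⋯` of acyclic TFSs. -/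

def delta (i : ℕ) : (ℕ ⊕ Unit) → Unit → Option (ℕ ⊕ Unit)
  | Sum.inl j, _ => if j + 1 < i then some (Sum.inl (j + 1))
      else if j + 1 = i then some (Sum.inr ()) else none
  | Sum.inr _, _ => none

def rk (i : ℕ) : ℕ ⊕ Unit → ℕ := Sum.elim id (fun _ => i)

lemma delta_step {i : ℕ} {q q' : ℕ ⊕ Unit} {f : Unit} (h : delta i q f = some q') :
    rk i q + 1 ≤ rk i q' := by
  cases q with
  | inl j =>
    simp only [delta] at h
    split_ifs at h with h1 h2
    · cases h; simp [rk]
    · cases h; simp [rk]; omega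
  | inr u => simp [delta] at h

lemma path_len {i : ℕ} : ∀ (α : List Unit) (q q' : ℕ ⊕ Unit),
    pathδ (delta i) q α = some q' → rk i q + α.length ≤ rk i q'
  | [], q, q', h => by simp [pathδ] at h; subst h; simp
  | f :: α, q, q', h => by
    simp only [pathδ, Option.bind_eq_some_iff] at h
    obtain ⟨q'', h1, h2⟩ := h
    have := delta_step h1
    have := path_len α q'' q' h2
    simp only [List.length_cons]; omega

lemma path_replicate {i : ℕ} : ∀ (k j : ℕ), j < i → j + k ≤ i →
    pathδ (delta i) (Sum.inl j) (List.replicate k ()) =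
      if j + k < i then some (Sum.inl (j + k)) else some (Sum.inr ())
  | 0, j, hj, hk => by simp [pathδ, hj]
  | k + 1, j, hj, hk => by
    simp only [List.replicate_succ, pathδ, delta]
    by_cases h1 : j + 1 < i
    · rw [if_pos h1]
      rw [Option.bind_some]
      rw [path_replicate k (j + 1) h1 (by omega)]
      have : j + 1 + k = j + (k + 1) := by omega
      rw [this]
    · have h2 : j + 1 = i := by omega
      rw [if_neg h1, if_pos h2]
      have hk0 : k = 0 := by omega
      subst hk0
      simp only [pathδ, Option.bind_some]
      rw [if_neg h1]
      rfl

lemma morph_path {Nodes Feats Types : Type} [PartialOrder Types] {θ : Nodes → Types}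
    {A B : TFS Nodes Feats} {g : Nodes → Nodes}
    (hm : IsMorphism θ A B g) : ∀ (π : List Feats) (q q' : Nodes),
    pathδ A.δ q π = some q' → pathδ B.δ (g q) π = some (g q')
  | [], q, q', h => by simp [pathδ] at h ⊢; rw [h]
  | f :: π, q, q', h => by
    simp only [pathδ, Option.bind_eq_some_iff] at h ⊢
    obtain ⟨q'', h1, h2⟩ := h
    exact ⟨g q'', hm.2.2.2 q f q'' h1, morph_path hm π q'' q' h2⟩

def Bfs (i : ℕ) : TFS (ℕ ⊕ Unit) Unit where
  Q := (Finset.range i).image Sum.inl ∪ {Sum.inr ()}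
  root := if i = 0 then Sum.inr () else Sum.inl 0
  root_mem := by
    split_ifs with h
    · simp
    · simp; omega
  δ := delta i
  dom := by
    rintro (j | u) f h
    · simp only [delta] at h
      split_ifs at h with h1 h2
      · simp; omega
      · simp; omega
      · simp at h
    · simp
  closed := by
    rintro (j | u) f q' h
    · simp only [delta] at h
      split_ifs at h with h1 h2
      · cases h; simp; omega
      · cases h; simp
    · simp [delta] at h
  reach := by
    rintro (j | u) hq
    · simp at hq
      have hi : i ≠ 0 := by omega
      refine ⟨List.replicate j (), ?_⟩
      rw [if_neg hi, path_replicate j 0 (by omega) (by omega)]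
      simp [hq]
    · by_cases hi : i = 0
      · exact ⟨[], by simp [pathδ, hi]⟩
      · refine ⟨List.replicate i (), ?_⟩
        rw [if_neg hi, path_replicate i 0 (by omega) (by omega)]
        simp

theorem specification_not_well_founded :
    ∃ B : ℕ → TFS (ℕ ⊕ Unit) Unit,
      (∀ i, (B i).Q = (Finset.range i).image Sum.inl ∪ {Sum.inr ()} ∧
        (B i).root = (if i = 0 then Sum.inr () else Sum.inl 0) ∧
        (∀ j, (B i).δ (Sum.inl j) () =
          if j + 1 < i then some (Sum.inl (j + 1))
          else if j + 1 = i then some (Sum.inr ()) else none) ∧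
        (B i).δ (Sum.inr ()) () = none) ∧
      (∀ i, (B i).Acyclic) ∧
      (∀ i, StrictlySubsumes θ₀ (B i) (B (i + 1))) := by
  refine ⟨Bfs, fun i => ⟨rfl, rfl, fun j => rfl, rfl⟩, ?_, ?_⟩
  · intro i ⟨q, hq, α, hα, hp⟩
    have := path_len α q q hp
    have : α.length ≠ 0 := by simpa using hα
    omega
  · intro i
    constructor
    · refine ⟨Sum.elim Sum.inl (fun _ => Sum.inl i), ?_, ?_, ?_, ?_⟩
      · show Sum.elim Sum.inl (fun _ => Sum.inl i) (Bfs i).root = (Bfs (i+1)).root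
        by_cases hi : i = 0 <;> simp [Bfs, hi]
      · rintro (j | u) hq
        · simp [Bfs] at hq ⊢; omega
        · simp [Bfs]
      · rintro (j | u) hq <;> simp [θ₀]
      · rintro (j | u) f q' h
        · have h' : delta i (Sum.inl j) f = some q' := h
          simp only [delta] at h'
          show delta (i+1) (Sum.inl j) f = some (Sum.elim Sum.inl (fun _ => Sum.inl i) q')
          simp only [delta]
          split_ifs at h' with h1 h2
          · cases h'; rw [if_pos (by omega)]; simp
          · cases h'; rw [if_pos (by omega)]; simp [h2]
        · exact absurd h (by simp [Bfs, delta])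
    · rintro ⟨g, hm⟩
      have hroot : pathδ (delta (i+1)) (Bfs (i+1)).root (List.replicate (i+1) ()) = some (Sum.inr ()) := by
        show pathδ (delta (i+1)) (if i + 1 = 0 then Sum.inr () else Sum.inl 0) _ = _
        rw [if_neg (by omega), path_replicate (i+1) 0 (by omega) (by omega)]
        simp
      have h2 := morph_path hm _ _ _ hroot
      rw [hm.1] at h2
      have hlen := path_len _ _ _ h2
      have hmem : g (Sum.inr ()) ∈ (Bfs i).Q := hm.2.1 _ (by simp [Bfs])
      have hrk : rk i (g (Sum.inr ())) ≤ i := by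
        rcases h : g (Sum.inr ()) with j | u
        · rw [h] at hmem; simp [Bfs] at hmem; simp [rk]; omega
        · simp [rk]
      have hrt : rk i (Bfs i).root = 0 := by
        show rk i (if i = 0 then Sum.inr () else Sum.inl 0) = 0
        split_ifs with h <;> simp [rk, h]
      rw [hrt] at hlen
      simp at hlen
      omega
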